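/- If B and B' are perfectly isometric p-blocks, then for every i ≥ 0 the number k_i(B) of irreducible characters of height i in B equals k_i(B'); i.e., perfect isometries preserve the height distribution of irreducible characters. -/

import Mathlib

open scoped BigOperators
open Finset

noncomputable section

/-- `χ : G → ℂ` is an irreducible complex character of the finite group `G`. -/
def IsIrrChar (G : Type) [Group G] [Fintype G] (χ : G → ℂ) : Prop :=
  ∃ V : FDRep ℂ G, CategoryTheory.Simple V ∧ χ = V.character

/-- An element is `p`-regular if `p` does not divide its order. -/
def pRegular (p : ℕ) {G : Type} [Monoid G] (g : G) : Prop :=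
  ¬ p ∣ orderOf g

/-- The `p`-part of a natural number. -/
def pPart (p n : ℕ) : ℕ := p ^ (n.factorization p)

/-- The `p`-part of the order of the centralizer of `g`. -/
def centOrderP (p : ℕ) {G : Type} [Group G] (g : G) : ℕ :=
  pPart p (Nat.card (Subgroup.centralizer ({g} : Set G)))

/-- The usual inner product of class functions on a finite group. -/
def innerChar (G : Type) [Group G] [Fintype G] (χ ψ : G → ℂ) : ℂ :=
  (Fintype.card G : ℂ)⁻¹ * ∑ g : G, χ g * ψ g⁻¹

/-- The group `ℤIrr(B)` of generalized characters of a block `B`, realized as the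
`ℤ`-span of the characters in `B` inside the functions `G → ℂ`. -/
def ZIrr {G : Type} [Group G] [Fintype G] (B : Finset (G → ℂ)) : Submodule ℤ (G → ℂ) :=
  Submodule.span ℤ (B : Set (G → ℂ))

/-- A character `χ ∈ B` viewed as an element of `ℤIrr(B)`. -/
def elt {G : Type} [Group G] [Fintype G] {B : Finset (G → ℂ)} (χ : G → ℂ) (h : χ ∈ B) :
    ZIrr B :=
  ⟨χ, Submodule.subset_span (Finset.mem_coe.mpr h)⟩

/-- Broué's function `μ_I(g,h) = ∑_{χ ∈ Irr(B)} χ(g)·I(χ)(h)`. -/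
def muI {G H : Type} [Group G] [Fintype G] [Group H] [Fintype H]
    {B : Finset (G → ℂ)} {B' : Finset (H → ℂ)}
    (I : ZIrr B →ₗ[ℤ] ZIrr B') (g : G) (h : H) : ℂ :=
  ∑ χ ∈ B.attach, χ.1 g * ((I (elt χ.1 χ.2) : ZIrr B') : H → ℂ) h

/-- Broué's notion of a perfect isometry: an inner-product preserving `ℤ`-linear
bijection `ℤIrr(B) → ℤIrr(B')` satisfying the separation condition (sep) and the
integrality condition (int). -/
def IsPerfIso (p : ℕ) {G H : Type} [Group G] [Fintype G] [Group H] [Fintype H]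
    (B : Finset (G → ℂ)) (B' : Finset (H → ℂ)) (I : ZIrr B ≃ₗ[ℤ] ZIrr B') : Prop :=
  (∀ x y : ZIrr B,
      innerChar H (I x : H → ℂ) (I y : H → ℂ) = innerChar G (x : G → ℂ) (y : G → ℂ)) ∧
  (∀ (g : G) (h : H), Xor' (pRegular p g) (pRegular p h) → muI I.toLinearMap g h = 0) ∧
  (∀ (g : G) (h : H), IsIntegral ℤ (muI I.toLinearMap g h / (centOrderP p g : ℂ)) ∧
      IsIntegral ℤ (muI I.toLinearMap g h / (centOrderP p h : ℂ)))

/-- By Osima's theorem, `B` is a union of `p`-blocks iff it consists of irreducible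
characters and satisfies block orthogonality between `p`-regular and `p`-singular
columns. -/
def IsBlockUnion (p : ℕ) (G : Type) [Group G] [Fintype G] (B : Finset (G → ℂ)) : Prop :=
  (∀ χ ∈ B, IsIrrChar G χ) ∧
  ∀ g h : G, pRegular p g → ¬ pRegular p h → ∑ χ ∈ B, χ g * χ h = 0

/-- A `p`-block of `G`: a minimal nonempty union of blocks. -/
def IsBlock (p : ℕ) (G : Type) [Group G] [Fintype G] (B : Finset (G → ℂ)) : Prop :=
  IsBlockUnion p G B ∧ B.Nonempty ∧
    ∀ C ⊆ B, IsBlockUnion p G C → C = ∅ ∨ C = B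

/-- The data of a `p`-block `B` of a finite group `G`: the irreducible ordinary
characters `χ i` (`i : ι`, so `k(B) = |ι|`), the irreducible Brauer characters `φ j`
(`j : κ`, so `l(B) = |κ|`), the decomposition matrix `Q`, the degrees, and the
standard facts relating them: `χ = Q·φ` on `p`-regular elements, block orthogonality
(Osima's characterization of unions of blocks), `Q` has `ℤ`-linearly independent
columns, and every generalized character of `B` vanishing on `p`-singular elements is
a `ℤ`-linear combination of the projective indecomposable characters (i.e. its
coefficient vector lies in the `ℤ`-column span of `Q`). -/
structure BlockData (p : ℕ) (G : Type) [Group G] [Fintype G] where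
  ι : Type
  κ : Type
  [fι : Fintype ι]
  [fκ : Fintype κ]
  [dι : DecidableEq ι]
  [dκ : DecidableEq κ]
  [nι : Nonempty ι]
  χ : ι → G → ℂ
  φ : κ → G → ℂ
  Q : Matrix ι κ ℤ
  deg : ι → ℕ
  irr : ∀ i, IsIrrChar G (χ i)
  inj : Function.Injective χ
  degpos : ∀ i, 0 < deg i
  hdeg : ∀ i, χ i 1 = (deg i : ℂ)
  blockOrth : ∀ g h : G, pRegular p g → ¬ pRegular p h → ∑ i, χ i g * χ i h = 0
  decomp : ∀ i g, pRegular p g → χ i g = ∑ j, (Q i j : ℂ) * φ j g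
  colIndep : LinearIndependent ℤ fun j i => Q i j
  vanishing : ∀ c : ι → ℤ, (∀ g, ¬ pRegular p g → ∑ i, (c i : ℂ) * χ i g = 0) →
    ∃ a : κ → ℤ, ∀ i, c i = ∑ j, Q i j * a j

attribute [instance] BlockData.fι BlockData.fκ BlockData.dι BlockData.dκ BlockData.nι

variable {p : ℕ} {G H : Type} [Group G] [Fintype G] [Group H] [Fintype H]

/-- Broué's function `μ_I` for an isometry given in coordinates with respect to the
orthonormal bases `Irr(B)`, `Irr(B')`. -/
def muD (D : BlockData p G) (E : BlockData p H)
    (I : (D.ι → ℤ) ≃ₗ[ℤ] (E.ι → ℤ)) (g : G) (h : H) : ℂ :=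
  ∑ i, D.χ i g * ∑ i', ((I (Pi.single i 1)) i' : ℂ) * E.χ i' h

/-- A perfect isometry between blocks given by their block data, in coordinates. -/
def IsPerfIsoD (D : BlockData p G) (E : BlockData p H)
    (I : (D.ι → ℤ) ≃ₗ[ℤ] (E.ι → ℤ)) : Prop :=
  (∀ c c' : D.ι → ℤ, ∑ i', I c i' * I c' i' = ∑ i, c i * c' i) ∧
  (∀ (g : G) (h : H), Xor' (pRegular p g) (pRegular p h) → muD D E I g h = 0) ∧
  (∀ (g : G) (h : H), IsIntegral ℤ (muD D E I g h / (centOrderP p g : ℂ)) ∧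
      IsIntegral ℤ (muD D E I g h / (centOrderP p h : ℂ)))

/-- The minimal `p`-adic valuation of a character degree in the block. -/
def BlockData.minval (D : BlockData p G) : ℕ :=
  sInf (Set.range fun i => (D.deg i).factorization p)

/-- The defect `d` of the block, defined by `p^{a-d} = min_χ χ(1)_p` where
`|G|_p = p^a`. -/
def BlockData.defect (D : BlockData p G) : ℕ :=
  (Fintype.card G).factorization p - D.minval

/-- The height of the irreducible character `χ i`, defined by
`χ i (1)_p = p^{a-d+h}`. -/
def BlockData.height (D : BlockData p G) (i : D.ι) : ℕ :=
  (D.deg i).factorization p - D.minval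

section Aux

open CategoryTheory

set_option linter.unusedSectionVars false

omit [Group H] [Fintype H]

lemma mkOut' {M : Type} [Monoid M] (c : ConjClasses M) :
    ConjClasses.mk (Quotient.out c) = c := by
  rw [← ConjClasses.quotient_mk_eq_mk]; exact Quotient.out_eq c

lemma classSum_comm (g : G) [DecidableEq (ConjClasses G)] (b : MonoidAlgebra ℤ G) :
    Commute b (∑ x ∈ univ.filter fun x => ConjClasses.mk x = ConjClasses.mk g,
      MonoidAlgebra.single x (1:ℤ)) := by
  induction b using MonoidAlgebra.induction_on with
  | of h =>
    show _ = _
    rw [Finset.mul_sum, Finset.sum_mul]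
    rw [show (MonoidAlgebra.of ℤ G h : MonoidAlgebra ℤ G) = MonoidAlgebra.single h 1 from rfl]
    simp only [MonoidAlgebra.single_mul_single, one_mul, mul_one]
    refine Finset.sum_nbij' (fun x => h * x * h⁻¹) (fun x => h⁻¹ * x * h) ?_ ?_ ?_ ?_ ?_
    · intro x hx
      simp only [mem_filter, mem_univ, true_and] at hx ⊢
      rw [← hx]
      rw [ConjClasses.mk_eq_mk_iff_isConj]
      exact (isConj_iff.mpr ⟨h, by group⟩).symm
    · intro x hx
      simp only [mem_filter, mem_univ, true_and] at hx ⊢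
      rw [← hx, ConjClasses.mk_eq_mk_iff_isConj]
      exact (isConj_iff.mpr ⟨h⁻¹, by group⟩).symm
    · intro x _; group
    · intro x _; group
    · intro x _
      congr 1
      group
  | add f g hf hg => exact hf.add_left hg
  | smul r f hf =>
    show (r • f) * _ = _ * (r • f)
    rw [smul_mul_assoc, mul_smul_comm, hf]

lemma centralCharInt (V : FDRep ℂ G) [Simple V] (g : G) [DecidableEq (ConjClasses G)] :
    IsIntegral ℤ (((univ.filter fun x => ConjClasses.mk x = ConjClasses.mk g).card : ℂ) *
      V.character g / V.character 1) := by
  by_cases hd : V.character 1 = 0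
  · rw [hd, div_zero]; exact isIntegral_zero
  have hfr : 0 < Module.finrank ℂ V := by
    rcases Nat.eq_zero_or_pos (Module.finrank ℂ V) with h | h
    · exfalso; apply hd; rw [FDRep.char_one, h]; norm_num
    · exact h
  haveI : Nontrivial V := Module.nontrivial_of_finrank_pos hfr
  set K : Finset G := univ.filter fun x => ConjClasses.mk x = ConjClasses.mk g with hK
  set z : MonoidAlgebra ℤ G := ∑ x ∈ K, MonoidAlgebra.single x (1:ℤ) with hz
  set Ψ : MonoidAlgebra ℤ G →ₐ[ℤ] Module.End ℂ V := (MonoidAlgebra.lift ℤ (Module.End ℂ V) G) V.ρ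
    with hΨ
  haveI : Module.Finite ℤ (MonoidAlgebra ℤ G) :=
    Module.Finite.equiv (MonoidAlgebra.coeffLinearEquiv ℤ).symm
  have hzint : IsIntegral ℤ z := IsIntegral.of_finite ℤ z
  have hint : IsIntegral ℤ (Ψ z) := hzint.map Ψ
  have hcomm : ∀ h : G, (Ψ z) ∘ₗ (V.ρ h) = (V.ρ h) ∘ₗ (Ψ z) := by
    intro h
    have := classSum_comm g (MonoidAlgebra.single h (1:ℤ))
    have h2 := congrArg Ψ this.symm
    rw [map_mul, map_mul] at h2
    have h3 : Ψ (MonoidAlgebra.single h 1) = V.ρ h := by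
      rw [hΨ]; exact MonoidAlgebra.lift_single _ _ _ |>.trans (one_smul _ _)
    rw [h3] at h2
    exact h2
  obtain ⟨c, hc⟩ := CategoryTheory.endomorphism_simple_eq_smul_id (X := V) ℂ
    (show V ⟶ V from ⟨FGModuleCat.ofHom (Ψ z), fun h => by ext v; exact LinearMap.congr_fun (hcomm h) v⟩)
  have hc' : (c • LinearMap.id : Module.End ℂ V) = Ψ z := by
    have := congrArg (fun f => f.hom.hom.hom) hc
    exact this
  have hcint : IsIntegral ℤ c := by
    rw [← Module.algebraMap_end_eq_smul_id] at hc'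
    rw [← hc'] at hint
    have hinj : Function.Injective (algebraMap ℂ (Module.End ℂ V)) := by
      intro a b hab
      obtain ⟨v, hv⟩ := exists_ne (0 : V)
      have := LinearMap.congr_fun hab v
      simp only [Module.algebraMap_end_apply] at this
      exact smul_left_injective ℂ hv this
    exact (isIntegral_algebraMap_iff hinj).mp hint
  have htr : LinearMap.trace ℂ V (Ψ z) = (K.card : ℂ) * V.character g := by
    rw [hz, map_sum, map_sum]
    have : ∀ x ∈ K, LinearMap.trace ℂ V (Ψ (MonoidAlgebra.single x 1)) = V.character g := by
      intro x hx
      rw [hΨ, MonoidAlgebra.lift_single, one_smul]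
      rw [hK, mem_filter] at hx
      obtain ⟨u, hu⟩ := isConj_iff.mp (ConjClasses.mk_eq_mk_iff_isConj.mp hx.2.symm)
      show V.character x = V.character g
      rw [← hu, FDRep.char_conj]
    rw [Finset.sum_congr rfl this, Finset.sum_const, nsmul_eq_mul]
  have htr2 : LinearMap.trace ℂ V (Ψ z) = c * V.character 1 := by
    rw [← hc', map_smul, LinearMap.trace_id, FDRep.char_one]
    simp [mul_comm]
  have : c = (K.card : ℂ) * V.character g / V.character 1 := by
    rw [eq_div_iff hd, ← htr2]
    exact htr
  rwa [← this]

lemma keyIneq (χ : G → ℂ) (hχ : IsIrrChar G χ) (d : ℕ) (hd : χ 1 = (d : ℂ)) (hd0 : d ≠ 0)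
    (a' : ℕ) (f : G → ℂ) (hcl : ∀ x g : G, f (x * g * x⁻¹) = f g)
    (hintf : ∀ g, IsIntegral ℤ (f g / ((p:ℂ)^a'))) [Fact p.Prime]
    (w : ℤ) (hw : w ≠ 0)
    (horth : ∑ g : G, χ g⁻¹ * f g = (Fintype.card G : ℂ) * w) :
    d.factorization p + a' ≤
      (Fintype.card G).factorization p + w.natAbs.factorization p := by
  classical
  obtain ⟨V, hs, hV⟩ := hχ
  haveI := hs
  have hp : (p:ℂ) ^ a' ≠ 0 := pow_ne_zero _ (Nat.cast_ne_zero.mpr (Fact.out : p.Prime).pos.ne')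
  have hdC : (d:ℂ) ≠ 0 := Nat.cast_ne_zero.mpr hd0
  have hχcl : ∀ x g : G, χ (x * g * x⁻¹) = χ g := by
    intro x g; rw [hV]; exact FDRep.char_conj V g x
  have hre : ∑ g : G, χ g⁻¹ * f g = ∑ g : G, χ g * f g⁻¹ :=
    Fintype.sum_equiv (Equiv.inv G) _ _ (fun g => by simp)
  set F : G → ℂ := fun g => χ g * f g⁻¹ with hF
  have hFcl : ∀ x g : G, F (x * g * x⁻¹) = F g := by
    intro x g
    have : (x * g * x⁻¹)⁻¹ = x * g⁻¹ * x⁻¹ := by group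
    rw [hF]; dsimp only; rw [this, hχcl, hcl]
  set Kc : ConjClasses G → ℕ := fun c => (univ.filter fun x => ConjClasses.mk x = c).card with hKc
  have hgrp : ∑ g : G, F g = ∑ c : ConjClasses G, (Kc c : ℂ) * F (Quotient.out c) := by
    rw [← Finset.sum_fiberwise_of_maps_to (g := fun g => ConjClasses.mk g)
      (fun x _ => mem_univ _) F]
    refine Finset.sum_congr rfl fun c _ => ?_
    have : ∀ x ∈ univ.filter fun x => ConjClasses.mk x = c, F x = F (Quotient.out c) := by
      intro x hx
      rw [mem_filter] at hx
      have hmk : ConjClasses.mk x = ConjClasses.mk (Quotient.out c) := by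
        rw [hx.2, mkOut']
      obtain ⟨u, hu⟩ := isConj_iff.mp (ConjClasses.mk_eq_mk_iff_isConj.mp hmk).symm
      rw [← hu, hFcl]
    rw [Finset.sum_congr rfl this, Finset.sum_const, nsmul_eq_mul]
  have hq : ((Fintype.card G : ℂ) * w) / ((d : ℂ) * (p:ℂ)^a') =
      ∑ c : ConjClasses G, ((Kc c : ℂ) * χ (Quotient.out c) / d) *
        (f ((Quotient.out c))⁻¹ / (p:ℂ)^a') := by
    rw [← horth, hre, hgrp, Finset.sum_div]
    refine Finset.sum_congr rfl fun c _ => ?_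
    rw [hF]; dsimp only
    field_simp
  have hqint : IsIntegral ℤ (((Fintype.card G : ℂ) * w) / ((d : ℂ) * (p:ℂ)^a')) := by
    rw [hq]
    refine IsIntegral.sum _ fun c _ => IsIntegral.mul ?_ (hintf _)
    have := centralCharInt V (Quotient.out c)
    have hKeq : (univ.filter fun x => ConjClasses.mk x = ConjClasses.mk (Quotient.out c)) =
        (univ.filter fun x => ConjClasses.mk x = c) := by
      simp [mkOut']
    rw [hKeq] at this
    rw [hV]
    have hd1 : V.character 1 = (d:ℂ) := by rw [← hV]; exact hd
    rw [← hd1]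
    exact this
  set q : ℚ := ((Fintype.card G : ℚ) * w) / ((d:ℚ) * (p:ℚ)^a') with hqdef
  have hcast : ((q : ℚ) : ℂ) = ((Fintype.card G : ℂ) * w) / ((d : ℂ) * (p:ℂ)^a') := by
    rw [hqdef]; push_cast; ring
  have hqQ : IsIntegral ℤ q := by
    have h1 : IsIntegral ℤ ((q:ℂ)) := hcast ▸ hqint
    have hinj : Function.Injective (algebraMap ℚ ℂ) := (algebraMap ℚ ℂ).injective
    rw [show ((q:ℂ)) = algebraMap ℚ ℂ q from (eq_ratCast (algebraMap ℚ ℂ) q).symm] at h1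
    exact (isIntegral_algebraMap_iff hinj).mp h1
  obtain ⟨z, hzq⟩ := IsIntegrallyClosed.isIntegral_iff.mp hqQ
  have hden : ((d:ℚ) * (p:ℚ)^a') ≠ 0 := by
    have : (p:ℚ) ≠ 0 := Nat.cast_ne_zero.mpr (Fact.out : p.Prime).pos.ne'
    positivity
  have hZq : (z:ℚ) * ((d:ℚ) * (p:ℚ)^a') = (Fintype.card G : ℚ) * w := by
    have : (z:ℚ) = q := by rw [← hzq]; norm_cast
    rw [this, hqdef, div_mul_cancel₀ _ hden]
  have hZ : z * ((d : ℤ) * (p:ℤ)^a') = (Fintype.card G : ℤ) * w := by exact_mod_cast hZq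
  have hdvd : ((d * p ^ a' : ℕ) : ℤ) ∣ (Fintype.card G : ℤ) * w := ⟨z, by push_cast; linarith⟩
  have hdvdN : d * p ^ a' ∣ Fintype.card G * w.natAbs := by
    have := Int.natAbs_dvd_natAbs.mpr hdvd
    simpa [Int.natAbs_mul, Int.natAbs_pow] using this
  have h1 : d * p ^ a' ≠ 0 :=
    Nat.mul_ne_zero hd0 (pow_ne_zero _ (Fact.out : p.Prime).pos.ne')
  have h2 : Fintype.card G * w.natAbs ≠ 0 :=
    Nat.mul_ne_zero Fintype.card_ne_zero (Int.natAbs_ne_zero.mpr hw)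
  have hle := (Nat.factorization_le_iff_dvd h1 h2).mpr hdvdN
  have hlep := (Finsupp.le_def.mp hle) p
  rw [Nat.factorization_mul hd0 (pow_ne_zero _ (Fact.out : p.Prime).pos.ne'),
    Nat.factorization_mul Fintype.card_ne_zero (Int.natAbs_ne_zero.mpr hw),
    (Fact.out : p.Prime).factorization_pow] at hlep
  simpa using hlep

omit [Group G] [Fintype G]

lemma unit_vec {κ : Type} [Fintype κ] [DecidableEq κ] (v : κ → ℤ)
    (hv : ∑ j, v j * v j = 1) :
    ∃ j, (v j = 1 ∨ v j = -1) ∧ ∀ k, k ≠ j → v k = 0 := by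
  have hex : ∃ j, v j ≠ 0 := by
    by_contra h
    push_neg at h
    simp [h] at hv
  obtain ⟨j, hj⟩ := hex
  have h1 : 1 ≤ v j * v j := by
    rcases lt_trichotomy (v j) 0 with h | h | h
    · nlinarith
    · exact absurd h hj
    · nlinarith
  have hsplit : v j * v j + ∑ k ∈ univ.erase j, v k * v k = 1 := by
    rw [← hv, ← Finset.add_sum_erase _ _ (mem_univ j)]
  have hrest : ∑ k ∈ univ.erase j, v k * v k = 0 := by
    have hnn : ∀ k ∈ univ.erase j, 0 ≤ v k * v k := fun k _ => mul_self_nonneg _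
    have := Finset.sum_nonneg hnn
    omega
  have hz : ∀ k ∈ univ.erase j, v k * v k = 0 :=
    (Finset.sum_eq_zero_iff_of_nonneg (fun k _ => mul_self_nonneg _)).mp hrest
  refine ⟨j, ?_, fun k hk => ?_⟩
  · have : v j * v j = 1 := by omega
    exact mul_self_eq_one_iff.mp this
  · have := hz k (mem_erase.mpr ⟨hk, mem_univ _⟩)
    nlinarith [mul_self_nonneg (v k)]

lemma signed_perm {ι κ : Type} [Fintype ι] [Fintype κ] [DecidableEq ι] [DecidableEq κ]
    (I : (ι → ℤ) ≃ₗ[ℤ] (κ → ℤ))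
    (h : ∀ c c' : ι → ℤ, ∑ i', I c i' * I c' i' = ∑ i, c i * c' i) :
    ∃ (σ : ι ≃ κ) (ε : ι → ℤ), (∀ i, ε i = 1 ∨ ε i = -1) ∧
      ∀ i, I (Pi.single i 1) = Pi.single (σ i) (ε i) := by
  have hnorm : ∀ i : ι, ∑ j, I (Pi.single i 1) j * I (Pi.single i 1) j = 1 := by
    intro i
    rw [h]
    simp [Pi.single_apply, Finset.sum_ite_eq']
  have hsym : ∀ c c' : κ → ℤ, ∑ i, I.symm c i * I.symm c' i = ∑ j, c j * c' j := by
    intro c c'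
    have := h (I.symm c) (I.symm c')
    simpa using this.symm
  have hnorm' : ∀ j : κ, ∑ i, I.symm (Pi.single j 1) i * I.symm (Pi.single j 1) i = 1 := by
    intro j
    rw [hsym]
    simp [Pi.single_apply, Finset.sum_ite_eq']
  choose σ hσ using fun i => unit_vec _ (hnorm i)
  choose τ hτ using fun j => unit_vec _ (hnorm' j)
  have hval : ∀ i, I (Pi.single i 1) = Pi.single (σ i) (I (Pi.single i 1) (σ i)) := by
    intro i
    ext j
    rcases eq_or_ne j (σ i) with rfl | hne
    · simp
    · rw [Pi.single_apply, if_neg hne, (hσ i).2 j hne]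
  have hval' : ∀ j, I.symm (Pi.single j 1) = Pi.single (τ j) (I.symm (Pi.single j 1) (τ j)) := by
    intro j
    ext i
    rcases eq_or_ne i (τ j) with rfl | hne
    · simp
    · rw [Pi.single_apply, if_neg hne, (hτ j).2 i hne]
  have hτσ : ∀ i, τ (σ i) = i := by
    intro i
    by_contra hne
    have h0 : I.symm (Pi.single (σ i) 1) i = 0 := (hτ (σ i)).2 i (fun hh => hne hh.symm |>.elim)
    have : I.symm (I (Pi.single i 1)) = Pi.single i (1:ℤ) := I.symm_apply_apply _
    rw [hval i] at this
    have hunit := (hσ i).1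
    have h2 : I.symm (Pi.single (σ i) (I (Pi.single i 1) (σ i))) i = 1 := by
      rw [this]; simp
    have h3 : Pi.single (σ i) (I (Pi.single i 1) (σ i)) =
        (I (Pi.single i 1) (σ i)) • (Pi.single (σ i) 1 : κ → ℤ) := by
      ext j'; by_cases hj' : j' = σ i <;> simp [Pi.single_apply, hj']
    rw [h3, map_smul] at h2
    rcases hunit with h4 | h4 <;> rw [h4] at h2 <;> simp [h0] at h2
  have hστ : ∀ j, σ (τ j) = j := by
    intro j
    by_contra hne
    have h0 : I (Pi.single (τ j) 1) j = 0 := (hσ (τ j)).2 j (fun hh => hne hh.symm |>.elim)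
    have : I (I.symm (Pi.single j 1)) = Pi.single j (1:ℤ) := I.apply_symm_apply _
    rw [hval' j] at this
    have hunit := (hτ j).1
    have h2 : I (Pi.single (τ j) (I.symm (Pi.single j 1) (τ j))) j = 1 := by
      rw [this]; simp
    have h3 : Pi.single (τ j) (I.symm (Pi.single j 1) (τ j)) =
        (I.symm (Pi.single j 1) (τ j)) • (Pi.single (τ j) 1 : ι → ℤ) := by
      ext i'; by_cases hi' : i' = τ j <;> simp [Pi.single_apply, hi']
    rw [h3, map_smul] at h2
    rcases hunit with h4 | h4 <;> rw [h4] at h2 <;> simp [h0] at h2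
  exact ⟨⟨σ, τ, hτσ, hστ⟩, fun i => I (Pi.single i 1) (σ i), fun i => (hσ i).1, hval⟩

end Aux

section Aux2

set_option linter.unusedSectionVars false

lemma chi_class (D : BlockData p G) (i : D.ι) (x g : G) : D.χ i (x * g * x⁻¹) = D.χ i g := by
  obtain ⟨V, hs, hV⟩ := D.irr i
  rw [hV]
  exact FDRep.char_conj V g x

lemma chi_one_ne (D : BlockData p G) (i : D.ι) : (D.deg i : ℂ) ≠ 0 :=
  Nat.cast_ne_zero.mpr (D.degpos i).ne'

lemma orthChar (D : BlockData p G) (k i : D.ι) :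
    ∑ g : G, D.χ k g * D.χ i g⁻¹ = if k = i then (Fintype.card G : ℂ) else 0 := by
  classical
  have hci : (Fintype.card G : ℂ) ≠ 0 := Nat.cast_ne_zero.mpr Fintype.card_ne_zero
  letI : Invertible (Fintype.card G : ℂ) := invertibleOfNonzero hci
  obtain hk := (D.irr k).choose_spec
  obtain hi := (D.irr i).choose_spec
  haveI := hk.1
  haveI := hi.1
  letI : Invertible ((Nat.card G : ℂ)) := by
    rw [Nat.card_eq_fintype_card]; exact ‹Invertible ((Fintype.card G : ℂ))›
  have horth : ⅟(Fintype.card G : ℂ) • ∑ g : G, (D.irr k).choose.character g *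
      (D.irr i).choose.character g⁻¹ =
      if Nonempty ((D.irr k).choose ≅ (D.irr i).choose) then (1:ℂ) else 0 := by
    have := FDRep.char_orthonormal (k := ℂ) (G := G) (D.irr k).choose (D.irr i).choose
    rw [Nat.card_eq_fintype_card] at this
    rw [smul_eq_mul, invOf_eq_inv]; convert this
  have hsum : ∑ g : G, D.χ k g * D.χ i g⁻¹ =
      (Fintype.card G : ℂ) * (if Nonempty ((D.irr k).choose ≅ (D.irr i).choose) then 1 else 0) := by
    have hcongr : ∑ g : G, D.χ k g * D.χ i g⁻¹ = ∑ g : G, (D.irr k).choose.character g *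
        (D.irr i).choose.character g⁻¹ :=
      Finset.sum_congr rfl fun g _ =>
        congrArg₂ (· * ·) (congrFun hk.2 g) (congrFun hi.2 g⁻¹)
    rw [hcongr, ← horth, smul_eq_mul, mul_invOf_cancel_left]
  rw [hsum]
  rcases eq_or_ne k i with rfl | hne
  · rw [if_pos ⟨CategoryTheory.Iso.refl _⟩, if_pos rfl, mul_one]
  · rw [if_neg, if_neg hne, mul_zero]
    rintro ⟨e⟩
    apply hne
    apply D.inj
    rw [hk.2, hi.2]
    exact FDRep.char_iso e

lemma centOrderP_one' : (centOrderP p (1 : G)) = p ^ ((Fintype.card G).factorization p) := by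
  unfold centOrderP pPart
  have h1 : Subgroup.centralizer ({(1:G)} : Set G) = ⊤ := by
    ext x; simp [Subgroup.mem_centralizer_iff]
  rw [h1, Subgroup.card_top, Nat.card_eq_fintype_card]

end Aux2

/-- Perfect isometries preserve the height distribution: if `B` and `B'` are
perfectly isometric, then `k_i(B) = k_i(B')` for every `i ≥ 0`. -/
theorem perfect_isometry_preserves_heights (p : ℕ) [Fact p.Prime]
    (G H : Type) [Group G] [Fintype G] [Group H] [Fintype H]
    (D : BlockData p G) (E : BlockData p H)
    (I : (D.ι → ℤ) ≃ₗ[ℤ] (E.ι → ℤ)) (hI : IsPerfIsoD D E I) :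
    ∀ n : ℕ, (Finset.univ.filter fun i : D.ι => D.height i = n).card =
      (Finset.univ.filter fun i' : E.ι => E.height i' = n).card := by
  classical
  obtain ⟨hiso, hsep, hint⟩ := hI
  obtain ⟨σ, ε, hε, hσ⟩ := signed_perm I hiso
  set a := (Fintype.card G).factorization p with ha
  set a' := (Fintype.card H).factorization p with ha'
  set vD : D.ι → ℕ := fun i => (D.deg i).factorization p with hvD
  set vE : E.ι → ℕ := fun i' => (E.deg i').factorization p with hvE
  have hmu : ∀ (g : G) (h : H), muD D E I g h =
      ∑ k, ((ε k : ℂ)) * (D.χ k g * E.χ (σ k) h) := by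
    intro g h
    unfold muD
    refine Finset.sum_congr rfl fun k _ => ?_
    rw [hσ k, Finset.sum_eq_single (σ k)]
    · rw [Pi.single_eq_same]; ring
    · intro b _ hb; rw [Pi.single_eq_of_ne hb]; simp
    · intro hb; exact absurd (mem_univ _) hb
  -- direction 1
  have dir1 : ∀ i, vD i + a' ≤ a + vE (σ i) := by
    intro i
    have hw : (ε i * (E.deg (σ i) : ℤ)) ≠ 0 := by
      rcases hε i with h | h <;> rw [h] <;> simp [(E.degpos (σ i)).ne']
    have horth1 : ∑ g : G, D.χ i g⁻¹ * muD D E I g 1 =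
        (Fintype.card G : ℂ) * ((ε i * (E.deg (σ i) : ℤ) : ℤ) : ℂ) := by
      have step : ∀ g : G, D.χ i g⁻¹ * muD D E I g 1 =
          ∑ k, ((ε k : ℂ) * E.χ (σ k) 1) * (D.χ k g * D.χ i g⁻¹) := by
        intro g
        rw [hmu, Finset.mul_sum]
        exact Finset.sum_congr rfl fun k _ => by ring
      simp_rw [step]
      rw [Finset.sum_comm]
      have step2 : ∀ k, ∑ g : G, ((ε k : ℂ) * E.χ (σ k) 1) * (D.χ k g * D.χ i g⁻¹) =
          ((ε k : ℂ) * E.χ (σ k) 1) * (if k = i then (Fintype.card G : ℂ) else 0) := by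
        intro k
        rw [← Finset.mul_sum, orthChar]
      simp_rw [step2]
      have hsw : ∀ k, ((ε k : ℂ) * E.χ (σ k) 1) * (if k = i then (Fintype.card G : ℂ) else 0) =
          if k = i then ((ε k : ℂ) * E.χ (σ k) 1) * (Fintype.card G : ℂ) else 0 := by
        intro k; split <;> simp
      simp_rw [hsw]
      rw [Finset.sum_ite_eq' univ i, if_pos (mem_univ i), E.hdeg (σ i)]
      push_cast
      ring
    have hcl1 : ∀ x g : G, muD D E I (x * g * x⁻¹) 1 = muD D E I g 1 := by
      intro x g
      rw [hmu, hmu]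
      exact Finset.sum_congr rfl fun k _ => by rw [chi_class]
    have hint1 : ∀ g : G, IsIntegral ℤ (muD D E I g 1 / ((p:ℂ) ^ a')) := by
      intro g
      have h2 := (hint g 1).2
      have h3 : ((centOrderP p (1:H) : ℕ) : ℂ) = (p:ℂ) ^ a' := by
        rw [centOrderP_one']
        push_cast
        rw [ha']
      rwa [h3] at h2
    have := keyIneq (D.χ i) (D.irr i) (D.deg i) (D.hdeg i) (D.degpos i).ne' a'
      (fun g => muD D E I g 1) hcl1 hint1 (ε i * (E.deg (σ i) : ℤ)) hw horth1
    have hnatabs : (ε i * (E.deg (σ i) : ℤ)).natAbs = E.deg (σ i) := by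
      rcases hε i with h | h <;> rw [h] <;> simp
    rwa [hnatabs] at this
  -- direction 2
  have dir2 : ∀ i' : E.ι, vE i' + a ≤ a' + vD (σ.symm i') := by
    intro i'
    have hw : (ε (σ.symm i') * (D.deg (σ.symm i') : ℤ)) ≠ 0 := by
      rcases hε (σ.symm i') with h | h <;> rw [h] <;> simp [(D.degpos (σ.symm i')).ne']
    have horth2 : ∑ h : H, E.χ i' h⁻¹ * muD D E I 1 h =
        (Fintype.card H : ℂ) * ((ε (σ.symm i') * (D.deg (σ.symm i') : ℤ) : ℤ) : ℂ) := by
      have step : ∀ h : H, E.χ i' h⁻¹ * muD D E I 1 h =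
          ∑ k, ((ε k : ℂ) * D.χ k 1) * (E.χ (σ k) h * E.χ i' h⁻¹) := by
        intro h
        rw [hmu, Finset.mul_sum]
        exact Finset.sum_congr rfl fun k _ => by ring
      simp_rw [step]
      rw [Finset.sum_comm]
      have step2 : ∀ k, ∑ h : H, ((ε k : ℂ) * D.χ k 1) * (E.χ (σ k) h * E.χ i' h⁻¹) =
          ((ε k : ℂ) * D.χ k 1) * (if k = σ.symm i' then (Fintype.card H : ℂ) else 0) := by
        intro k
        rw [← Finset.mul_sum, orthChar]
        congr 1
        by_cases hk : k = σ.symm i'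
        · rw [if_pos (by rw [hk]; exact σ.apply_symm_apply i'), if_pos hk]
        · rw [if_neg (fun hc => hk (by rw [← hc]; exact (σ.symm_apply_apply k).symm)), if_neg hk]
      simp_rw [step2]
      have hsw : ∀ k, ((ε k : ℂ) * D.χ k 1) * (if k = σ.symm i' then (Fintype.card H : ℂ) else 0) =
          if k = σ.symm i' then ((ε k : ℂ) * D.χ k 1) * (Fintype.card H : ℂ) else 0 := by
        intro k; split <;> simp
      simp_rw [hsw]
      rw [Finset.sum_ite_eq' univ (σ.symm i'), if_pos (mem_univ _), D.hdeg (σ.symm i')]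
      push_cast
      ring
    have hcl2 : ∀ x h : H, muD D E I 1 (x * h * x⁻¹) = muD D E I 1 h := by
      intro x h
      rw [hmu, hmu]
      exact Finset.sum_congr rfl fun k _ => by rw [chi_class]
    have hint2 : ∀ h : H, IsIntegral ℤ (muD D E I 1 h / ((p:ℂ) ^ a)) := by
      intro h
      have h2 := (hint 1 h).1
      have h3 : ((centOrderP p (1:G) : ℕ) : ℂ) = (p:ℂ) ^ a := by
        rw [centOrderP_one']
        push_cast
        rw [ha]
      rwa [h3] at h2
    have := keyIneq (E.χ i') (E.irr i') (E.deg i') (E.hdeg i') (E.degpos i').ne' a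
      (fun h => muD D E I 1 h) hcl2 hint2 (ε (σ.symm i') * (D.deg (σ.symm i') : ℤ)) hw horth2
    have hnatabs : (ε (σ.symm i') * (D.deg (σ.symm i') : ℤ)).natAbs = D.deg (σ.symm i') := by
      rcases hε (σ.symm i') with h | h <;> rw [h] <;> simp
    rwa [hnatabs] at this
  -- combine
  have heq : ∀ i, vD i + a' = vE (σ i) + a := by
    intro i
    have h1 := dir1 i
    have h2 := dir2 (σ i)
    rw [σ.symm_apply_apply] at h2
    omega
  -- minimal valuations
  have hmD : ∀ i, D.minval ≤ vD i := fun i => Nat.sInf_le ⟨i, rfl⟩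
  have hmE : ∀ i', E.minval ≤ vE i' := fun i' => Nat.sInf_le ⟨i', rfl⟩
  have hmDmem : ∃ i, vD i = D.minval := by
    have := Nat.sInf_mem (Set.range_nonempty (fun i => (D.deg i).factorization p))
    obtain ⟨i, hi⟩ := this
    exact ⟨i, hi⟩
  have hmEmem : ∃ i', vE i' = E.minval := by
    have := Nat.sInf_mem (Set.range_nonempty (fun i' => (E.deg i').factorization p))
    obtain ⟨i', hi'⟩ := this
    exact ⟨i', hi'⟩
  have hminval : E.minval + a = D.minval + a' := by
    obtain ⟨i0, hi0⟩ := hmDmem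
    obtain ⟨i1, hi1⟩ := hmEmem
    have h1 : E.minval + a ≤ D.minval + a' := by
      have := hmE (σ i0)
      have h2 := heq i0
      omega
    have h2 : D.minval + a' ≤ E.minval + a := by
      have := hmD (σ.symm i1)
      have h3 := heq (σ.symm i1)
      rw [σ.apply_symm_apply] at h3
      omega
    omega
  have hheight : ∀ i, E.height (σ i) = D.height i := by
    intro i
    show vE (σ i) - E.minval = vD i - D.minval
    have h1 := heq i
    have h2 := hmD i
    have h3 := hmE (σ i)
    omega
  -- conclude
  intro n
  refine Finset.card_bij (fun i _ => σ i) ?_ ?_ ?_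
  · intro i hi
    rw [mem_filter] at hi ⊢
    exact ⟨mem_univ _, by rw [hheight]; exact hi.2⟩
  · intro i _ j _ hij
    exact σ.injective hij
  · intro i' hi'
    rw [mem_filter] at hi'
    refine ⟨σ.symm i', ?_, σ.apply_symm_apply i'⟩
    rw [mem_filter]
    refine ⟨mem_univ _, ?_⟩
    have := hheight (σ.symm i')
    rw [σ.apply_symm_apply] at this
    rw [← this]
    exact hi'.2


end
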